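/- The map m : S^7 × S^7 → S^7 defined by m(x,y) = σ̃_x(y)/‖σ̃_x(y)‖ is well defined (σ̃_x(y) ≠ 0 for x, y ∈ S^7), continuous, and has e as a two-sided identity; thus S^7 is an H-space whenever S^6 admits an almost complex structure. -/

import Mathlib

open scoped RealInnerProductSpace Classical

/-- The Kirchhoff map `σ̃_x(z)`: writing `x = α·e + b` with `α = ⟨x,e⟩` and `b ⊥ e`,
`σ̃_x = α·Id + ‖b‖·J̃_{b/‖b‖}` (and `σ̃_x = α·Id` when `b = 0`), where `J : y ↦ J̃_y`
assigns to each unit vector `y ⊥ e` the extended complex structure of Kirchhoff's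
construction from an almost complex structure on `S⁶`. -/
noncomputable def kirchhoffMul {V : Type*} [NormedAddCommGroup V] [InnerProductSpace ℝ V]
    (J : V → V →ₗ[ℝ] V) (e x z : V) : V :=
  if x - ⟪x, e⟫ • e = (0 : V) then ⟪x, e⟫ • z
  else ⟪x, e⟫ • z + ‖x - ⟪x, e⟫ • e‖ •
    (J (‖x - ⟪x, e⟫ • e‖⁻¹ • (x - ⟪x, e⟫ • e))) z

set_option maxHeartbeats 1000000

/-- the map `m : S⁷ × S⁷ → S⁷`, `m(x,y) = σ̃_x(y)/‖σ̃_x(y)‖`, is well defined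
(`σ̃_x(y) ≠ 0` for `x, y ∈ S⁷`), continuous, and has `e` as a two-sided identity; thus `S⁷`
is an `H`-space whenever `S⁶` admits an almost complex structure. -/
theorem kirchhoff_stmt16
    (e : EuclideanSpace ℝ (Fin 8)) (he : ‖e‖ = 1)
    (J : EuclideanSpace ℝ (Fin 8) → EuclideanSpace ℝ (Fin 8) →ₗ[ℝ] EuclideanSpace ℝ (Fin 8))
    (horth : ∀ y, ‖y‖ = 1 → ⟪y, e⟫ = 0 → ∀ u v, ⟪J y u, J y v⟫ = ⟪u, v⟫)
    (hJ2 : ∀ y, ‖y‖ = 1 → ⟪y, e⟫ = 0 → ∀ u, J y (J y u) = -u)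
    (hJe : ∀ y, ‖y‖ = 1 → ⟪y, e⟫ = 0 → J y e = y)
    (hJy : ∀ y, ‖y‖ = 1 → ⟪y, e⟫ = 0 → J y y = -e)
    (hJcont : ContinuousOn
      (fun p : EuclideanSpace ℝ (Fin 8) × EuclideanSpace ℝ (Fin 8) => J p.1 p.2)
      ({y | ‖y‖ = 1 ∧ ⟪y, e⟫ = 0} ×ˢ Set.univ)) :
    (∀ x z : EuclideanSpace ℝ (Fin 8), ‖x‖ = 1 → ‖z‖ = 1 → kirchhoffMul J e x z ≠ 0)
      ∧ ContinuousOn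
          (fun p : EuclideanSpace ℝ (Fin 8) × EuclideanSpace ℝ (Fin 8) =>
            ‖kirchhoffMul J e p.1 p.2‖⁻¹ • kirchhoffMul J e p.1 p.2)
          (Metric.sphere 0 1 ×ˢ Metric.sphere 0 1)
      ∧ (∀ x z : EuclideanSpace ℝ (Fin 8), ‖x‖ = 1 → ‖z‖ = 1 →
          ‖‖kirchhoffMul J e x z‖⁻¹ • kirchhoffMul J e x z‖ = 1)
      ∧ (∀ z : EuclideanSpace ℝ (Fin 8), ‖z‖ = 1 →
          ‖kirchhoffMul J e e z‖⁻¹ • kirchhoffMul J e e z = z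
            ∧ ‖kirchhoffMul J e z e‖⁻¹ • kirchhoffMul J e z e = z) := by
  classical
  
  have hee : ⟪e, e⟫ = 1 := by rw [real_inner_self_eq_norm_sq, he]; norm_num
  set B : EuclideanSpace ℝ (Fin 8) → EuclideanSpace ℝ (Fin 8) := fun x => x - ⟪x, e⟫ • e with hB
  have hBorth : ∀ x : EuclideanSpace ℝ (Fin 8), ⟪B x, e⟫ = 0 := by
    intro x
    simp only [hB, inner_sub_left, real_inner_smul_left, hee]
    ring
  -- unit vector properties when B x ≠ 0
  have hy_unit : ∀ x : EuclideanSpace ℝ (Fin 8), B x ≠ 0 → ‖‖B x‖⁻¹ • B x‖ = 1 ∧ ⟪‖B x‖⁻¹ • B x, e⟫ = 0 := by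
    intro x hx
    constructor
    · rw [norm_smul, norm_inv, norm_norm, inv_mul_cancel₀ (norm_ne_zero_iff.mpr hx)]
    · rw [real_inner_smul_left, hBorth, mul_zero]
  -- Pythagoras on the sphere
  have hpyth : ∀ x : EuclideanSpace ℝ (Fin 8), ‖x‖ = 1 → ⟪x, e⟫ ^ 2 + ‖B x‖ ^ 2 = 1 := by
    intro x hx
    have hxd : x = ⟪x, e⟫ • e + B x := by simp [hB]
    have h0 : ⟪e, B x⟫ = 0 := by rw [real_inner_comm]; exact hBorth x
    have hinner : ⟪⟪x, e⟫ • e, B x⟫ = 0 := by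
      rw [real_inner_smul_left, h0, mul_zero]
    have := norm_add_sq_real (⟪x, e⟫ • e) (B x)
    rw [← hxd, hinner, hx, norm_smul, he] at this
    simp only [mul_one, Real.norm_eq_abs] at this
    nlinarith [sq_abs ⟪x, e⟫]
  -- norm preservation of J
  have hJnorm : ∀ y, ‖y‖ = 1 → ⟪y, e⟫ = 0 → ∀ u : EuclideanSpace ℝ (Fin 8), ‖J y u‖ = ‖u‖ := by
    intro y h1 h2 u
    have := horth y h1 h2 u u
    rw [real_inner_self_eq_norm_sq, real_inner_self_eq_norm_sq] at this
    rw [← Real.sqrt_sq (norm_nonneg (J y u)), this, Real.sqrt_sq (norm_nonneg u)]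
  -- ⟪u, J y u⟫ = 0
  have hskew : ∀ y, ‖y‖ = 1 → ⟪y, e⟫ = 0 → ∀ u : EuclideanSpace ℝ (Fin 8), ⟪u, J y u⟫ = 0 := by
    intro y h1 h2 u
    have h := horth y h1 h2 u (J y u)
    rw [hJ2 y h1 h2 u, inner_neg_right, real_inner_comm u (J y u)] at h
    linarith
  -- key norm lemma
  have hnorm : ∀ x z : EuclideanSpace ℝ (Fin 8), ‖x‖ = 1 → ‖z‖ = 1 → ‖kirchhoffMul J e x z‖ = 1 := by
    intro x z hx hz
    by_cases hb : B x = 0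
    · have hbx : x - ⟪x, e⟫ • e = 0 := hb
      rw [kirchhoffMul, if_pos hbx, norm_smul, hz, Real.norm_eq_abs, mul_one]
      have := hpyth x hx
      rw [hb, norm_zero] at this
      nlinarith [abs_nonneg ⟪x, e⟫, sq_abs ⟪x, e⟫]
    · obtain ⟨hy1, hy2⟩ := hy_unit x hb
      set y := ‖B x‖⁻¹ • B x with hy
      have hbx : ¬ (x - ⟪x, e⟫ • e = 0) := hb
      have hkey : kirchhoffMul J e x z = ⟪x, e⟫ • z + ‖B x‖ • J y z := by
        rw [kirchhoffMul, if_neg hbx]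
      have hin : ⟪⟪x, e⟫ • z, ‖B x‖ • J y z⟫ = 0 := by
        rw [real_inner_smul_left, real_inner_smul_right, hskew y hy1 hy2 z]
        ring
      have hns := norm_add_sq_real (⟪x, e⟫ • z) (‖B x‖ • J y z)
      rw [hin] at hns
      have h1 : ‖⟪x, e⟫ • z‖ = |⟪x, e⟫| := by
        rw [norm_smul, hz, mul_one, Real.norm_eq_abs]
      have h2 : ‖‖B x‖ • J y z‖ = ‖B x‖ := by
        rw [norm_smul, hJnorm y hy1 hy2 z, hz, mul_one, norm_norm]
      rw [h1, h2] at hns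
      have hp := hpyth x hx
      have hsq : ‖kirchhoffMul J e x z‖ ^ 2 = 1 := by
        rw [hkey, hns]
        nlinarith [sq_abs ⟪x, e⟫]
      rw [← Real.sqrt_sq (norm_nonneg (kirchhoffMul J e x z)), hsq, Real.sqrt_one]
  have hne : ∀ x z : EuclideanSpace ℝ (Fin 8), ‖x‖ = 1 → ‖z‖ = 1 → kirchhoffMul J e x z ≠ 0 := by
    intro x z hx hz h
    have := hnorm x z hx hz
    rw [h, norm_zero] at this
    norm_num at this
  refine ⟨hne, ?_, ?_, ?_⟩
  · -- continuity
    set s : Set (EuclideanSpace ℝ (Fin 8) × EuclideanSpace ℝ (Fin 8)) := Metric.sphere 0 1 ×ˢ Metric.sphere 0 1 with hs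
    have hmem : ∀ p : EuclideanSpace ℝ (Fin 8) × EuclideanSpace ℝ (Fin 8), p ∈ s → ‖p.1‖ = 1 ∧ ‖p.2‖ = 1 := by
      intro p hp
      obtain ⟨h1, h2⟩ := hp
      exact ⟨mem_sphere_zero_iff_norm.mp h1, mem_sphere_zero_iff_norm.mp h2⟩
    have hBcont : Continuous B :=
      continuous_id.sub (by fun_prop)
    set G : EuclideanSpace ℝ (Fin 8) × EuclideanSpace ℝ (Fin 8) → EuclideanSpace ℝ (Fin 8) := fun p =>
      if B p.1 = 0 then 0 else ‖B p.1‖ • J (‖B p.1‖⁻¹ • B p.1) p.2 with hG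
    have hFeq : ∀ p : EuclideanSpace ℝ (Fin 8) × EuclideanSpace ℝ (Fin 8), kirchhoffMul J e p.1 p.2 = ⟪p.1, e⟫ • p.2 + G p := by
      intro p
      by_cases hb : B p.1 = 0
      · have hbx : p.1 - ⟪p.1, e⟫ • e = 0 := hb
        rw [kirchhoffMul, if_pos hbx, hG]
        simp [hb]
      · have hbx : ¬ (p.1 - ⟪p.1, e⟫ • e = 0) := hb
        rw [kirchhoffMul, if_neg hbx, hG]
        simp only [if_neg hb]
        rfl
    have hU : IsOpen {p : EuclideanSpace ℝ (Fin 8) × EuclideanSpace ℝ (Fin 8) | B p.1 ≠ 0} := by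
      have : {p : EuclideanSpace ℝ (Fin 8) × EuclideanSpace ℝ (Fin 8) | B p.1 ≠ 0} = (fun p : EuclideanSpace ℝ (Fin 8) × EuclideanSpace ℝ (Fin 8) => B p.1) ⁻¹' {0}ᶜ := rfl
      rw [this]
      exact (isOpen_compl_singleton).preimage (hBcont.comp continuous_fst)
    -- G is continuous on s
    have hGcont : ContinuousOn G s := by
      intro p hp
      by_cases hb : B p.1 = 0
      · -- squeeze
        have hGp : G p = 0 := by rw [hG]; simp [hb]
        rw [ContinuousWithinAt, hGp]
        apply squeeze_zero_norm' (a := fun q : EuclideanSpace ℝ (Fin 8) × EuclideanSpace ℝ (Fin 8) => ‖B q.1‖)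
        · filter_upwards [self_mem_nhdsWithin] with q hq
          by_cases hbq : B q.1 = 0
          · simp [hG, hbq]
          · obtain ⟨hy1, hy2⟩ := hy_unit q.1 hbq
            have : G q = ‖B q.1‖ • J (‖B q.1‖⁻¹ • B q.1) q.2 := by rw [hG]; simp [hbq]
            rw [this, norm_smul, norm_norm, hJnorm _ hy1 hy2, (hmem q hq).2, mul_one]
        · have : Filter.Tendsto (fun q : EuclideanSpace ℝ (Fin 8) × EuclideanSpace ℝ (Fin 8) => ‖B q.1‖) (nhdsWithin p s) (nhds ‖B p.1‖) :=
            ((hBcont.comp continuous_fst).norm.continuousWithinAt)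
          rwa [hb, norm_zero] at this
      · -- continuous at p since B p.1 ≠ 0
        have hpU : {q : EuclideanSpace ℝ (Fin 8) × EuclideanSpace ℝ (Fin 8) | B q.1 ≠ 0} ∈ nhds p := hU.mem_nhds hb
        have hφ : ContinuousOn (fun q : EuclideanSpace ℝ (Fin 8) × EuclideanSpace ℝ (Fin 8) => (‖B q.1‖⁻¹ • B q.1, q.2))
            {q : EuclideanSpace ℝ (Fin 8) × EuclideanSpace ℝ (Fin 8) | B q.1 ≠ 0} := by
          apply ContinuousOn.prodMk
          · exact ((((hBcont.comp continuous_fst).norm).continuousOn.inv₀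
              (fun q hq => norm_ne_zero_iff.mpr hq)).smul
              (hBcont.comp continuous_fst).continuousOn)
          · exact continuous_snd.continuousOn
        have hmaps : Set.MapsTo (fun q : EuclideanSpace ℝ (Fin 8) × EuclideanSpace ℝ (Fin 8) => (‖B q.1‖⁻¹ • B q.1, q.2))
            {q : EuclideanSpace ℝ (Fin 8) × EuclideanSpace ℝ (Fin 8) | B q.1 ≠ 0} ({y | ‖y‖ = 1 ∧ ⟪y, e⟫ = 0} ×ˢ Set.univ) := by
          intro q hq
          exact ⟨hy_unit q.1 hq, Set.mem_univ _⟩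
        have hcomp : ContinuousOn (fun q : EuclideanSpace ℝ (Fin 8) × EuclideanSpace ℝ (Fin 8) => J (‖B q.1‖⁻¹ • B q.1) q.2)
            {q : EuclideanSpace ℝ (Fin 8) × EuclideanSpace ℝ (Fin 8) | B q.1 ≠ 0} := hJcont.comp hφ hmaps
        have hH : ContinuousOn (fun q : EuclideanSpace ℝ (Fin 8) × EuclideanSpace ℝ (Fin 8) => ‖B q.1‖ • J (‖B q.1‖⁻¹ • B q.1) q.2)
            {q : EuclideanSpace ℝ (Fin 8) × EuclideanSpace ℝ (Fin 8) | B q.1 ≠ 0} :=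
          ((hBcont.comp continuous_fst).norm.continuousOn).smul hcomp
        have hHat : ContinuousAt (fun q : EuclideanSpace ℝ (Fin 8) × EuclideanSpace ℝ (Fin 8) => ‖B q.1‖ • J (‖B q.1‖⁻¹ • B q.1) q.2) p :=
          hH.continuousAt hpU
        have hEq : G =ᶠ[nhds p] (fun q : EuclideanSpace ℝ (Fin 8) × EuclideanSpace ℝ (Fin 8) => ‖B q.1‖ • J (‖B q.1‖⁻¹ • B q.1) q.2) := by
          filter_upwards [hpU] with q hq
          rw [hG]; simp [hq]
        exact (hHat.congr hEq.symm).continuousWithinAt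
    have hFcont : ContinuousOn (fun p : EuclideanSpace ℝ (Fin 8) × EuclideanSpace ℝ (Fin 8) => kirchhoffMul J e p.1 p.2) s := by
      have : ContinuousOn (fun p : EuclideanSpace ℝ (Fin 8) × EuclideanSpace ℝ (Fin 8) => ⟪p.1, e⟫ • p.2 + G p) s :=
        (((by fun_prop : Continuous fun p : EuclideanSpace ℝ (Fin 8) × EuclideanSpace ℝ (Fin 8) => ⟪p.1, e⟫ • p.2)).continuousOn).add hGcont
      exact this.congr (fun p _ => hFeq p)
    have hFne : ∀ p ∈ s, ‖kirchhoffMul J e p.1 p.2‖ ≠ 0 := by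
      intro p hp
      obtain ⟨h1, h2⟩ := hmem p hp
      rw [hnorm p.1 p.2 h1 h2]
      norm_num
    exact (hFcont.norm.inv₀ hFne).smul hFcont
  · intro x z hx hz
    rw [hnorm x z hx hz, inv_one, one_smul]
    exact hnorm x z hx hz
  · intro z hz
    have hBe : B e = 0 := by
      show e - ⟪e, e⟫ • e = 0
      rw [hee, one_smul, sub_self]
    constructor
    · have : kirchhoffMul J e e z = z := by
        rw [kirchhoffMul, if_pos hBe, hee, one_smul]
      rw [this, hz, inv_one, one_smul]
    · have hn : ‖kirchhoffMul J e z e‖ = 1 := hnorm z e hz he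
      have : kirchhoffMul J e z e = z := by
        by_cases hb : B z = 0
        · have hbz : z - ⟪z, e⟫ • e = 0 := hb
          rw [kirchhoffMul, if_pos hbz]
          exact (sub_eq_zero.mp hbz).symm
        · obtain ⟨hy1, hy2⟩ := hy_unit z hb
          have hbx : ¬ (z - ⟪z, e⟫ • e = 0) := hb
          have hk : kirchhoffMul J e z e
              = ⟪z, e⟫ • e + ‖B z‖ • J (‖B z‖⁻¹ • B z) e := by
            rw [kirchhoffMul, if_neg hbx]
          rw [hk, hJe _ hy1 hy2, smul_smul,
            mul_inv_cancel₀ (norm_ne_zero_iff.mpr hb), one_smul]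
          show ⟪z, e⟫ • e + (z - ⟪z, e⟫ • e) = z
          abel
      rw [this, hz, inv_one, one_smul]
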